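/- Let F ⊆ 2^E be a family of subsets and e₀ ∈ E. Let F₀ = {σ : σ \ {e₀} ∈ F and σ ∪ {e₀} ∈ F} and F₁ = F \ F₀. Then F₀ admits a complete acyclic element matching M₀ (pairing σ \ {e₀} with σ ∪ {e₀}), and for any acyclic element matching M₁ on F₁, the union M₀ ∪ M₁ is an acyclic element matching on F whose critical sets are exactly the critical sets of M₁. -/

import Mathlib

attribute [local instance] Classical.propDecidable

variable {α : Type} [DecidableEq α]

/-- An element matching on a family `F` of finite sets: a set `M` of pairs `(σ, τ)` with
`σ ⊊ τ`, `|τ \ σ| = 1`, each member of `F` appearing in at most one pair. -/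
def IsElemMatching (F : Set (Finset α)) (M : Set (Finset α × Finset α)) : Prop :=
  (∀ p ∈ M, p.1 ∈ F ∧ p.2 ∈ F ∧ p.1 ⊂ p.2 ∧ (p.2 \ p.1).card = 1) ∧
  ∀ p ∈ M, ∀ q ∈ M, p ≠ q → p.1 ≠ q.1 ∧ p.1 ≠ q.2 ∧ p.2 ≠ q.1 ∧ p.2 ≠ q.2

/-- The edge relation of the digraph `D(F, M)`: matched covers are oriented upwards,
unmatched covers downwards. -/
def MorseEdge (F : Set (Finset α)) (M : Set (Finset α × Finset α)) (σ τ : Finset α) : Prop :=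
  σ ∈ F ∧ τ ∈ F ∧ ((σ, τ) ∈ M ∨ (τ ⊂ σ ∧ (σ \ τ).card = 1 ∧ (τ, σ) ∉ M))

/-- The element matching `M` is acyclic: the digraph `D(F, M)` has no directed cycle. -/
def MorseAcyclic (F : Set (Finset α)) (M : Set (Finset α × Finset α)) : Prop :=
  ∀ σ, ¬ Relation.TransGen (MorseEdge F M) σ σ

/-- A member of `F` is critical for `M` if it appears in no pair of `M`. -/
def MorseCritical (F : Set (Finset α)) (M : Set (Finset α × Finset α)) (σ : Finset α) : Prop :=
  σ ∈ F ∧ ∀ p ∈ M, σ ≠ p.1 ∧ σ ≠ p.2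

private lemma transGen_not_refl {β : Type} {R : β → β → Prop} {m : β → ℕ}
    (h : ∀ a b, R a b → m b < m a) (a : β) : ¬ Relation.TransGen R a a := by
  intro hc
  have key : ∀ {x y : β}, Relation.TransGen R x y → m y < m x := by
    intro x y hxy
    induction hxy with
    | single h' => exact h _ _ h'
    | tail _ h' ih => exact (h _ _ h').trans ih
  exact absurd (key hc) (lt_irrefl _)

private lemma cycle_restrict {β : Type} {R : β → β → Prop} (m : β → ℕ)
    (hm : ∀ a b, R a b → m b ≤ m a) {a : β} (hc : Relation.TransGen R a a) :
    Relation.TransGen (fun x y => R x y ∧ m x = m y) a a := by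
  have mono : ∀ {x y : β}, Relation.TransGen R x y → m y ≤ m x := by
    intro x y hxy
    induction hxy with
    | single h' => exact hm _ _ h'
    | tail _ h' ih => exact (hm _ _ h').trans ih
  have key : ∀ {x y : β}, Relation.TransGen R x y → m x ≤ m y →
      Relation.TransGen (fun u v => R u v ∧ m u = m v) x y := by
    intro x y hxy
    induction hxy with
    | single h' => exact fun hle => Relation.TransGen.single ⟨h', le_antisymm hle (hm _ _ h')⟩
    | @tail b c hab hbc ih =>
      intro hle
      have h1 : m c ≤ m b := hm _ _ hbc
      have h2 : m b ≤ m x := mono hab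
      exact (ih (by omega)).tail ⟨hbc, by omega⟩
  exact key hc le_rfl

private lemma cover_struct {α : Type} [DecidableEq α] {σ τ : Finset α}
    (hsub : τ ⊂ σ) (hcard : (σ \ τ).card = 1) :
    ∃ x, x ∈ σ ∧ x ∉ τ ∧ τ = σ.erase x ∧ σ.card = τ.card + 1 := by
  obtain ⟨x, hx⟩ := Finset.card_eq_one.mp hcard
  have hmem : x ∈ σ \ τ := hx ▸ Finset.mem_singleton_self x
  rw [Finset.mem_sdiff] at hmem
  refine ⟨x, hmem.1, hmem.2, ?_, ?_⟩
  · have h1 : σ \ (σ \ τ) = σ ∩ τ := Finset.sdiff_sdiff_self_left σ τ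
    rw [hx] at h1
    rw [Finset.erase_eq, h1, Finset.inter_eq_right.mpr hsub.subset]
  · have h1 := Finset.card_sdiff_of_subset hsub.subset
    have h2 := Finset.card_le_card hsub.subset
    omega

private noncomputable def botB (M : Set (Finset α × Finset α)) (σ : Finset α) : ℕ :=
  if ∃ p ∈ M, σ = p.1 then 1 else 0

private noncomputable def topB (M : Set (Finset α × Finset α)) (σ : Finset α) : ℕ :=
  if ∃ p ∈ M, σ = p.2 then 1 else 0

private def eflag (e₀ : α) (σ : Finset α) : ℕ := if e₀ ∈ σ then 0 else 1

private lemma botB_le (M : Set (Finset α × Finset α)) (σ : Finset α) : botB M σ ≤ 1 := by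
  unfold botB; split <;> omega

private lemma botB_one (M : Set (Finset α × Finset α)) (σ : Finset α) :
    botB M σ = 1 ↔ ∃ p ∈ M, σ = p.1 := by
  unfold botB
  by_cases h : ∃ p ∈ M, σ = p.1
  · rw [if_pos h]; simp [h]
  · rw [if_neg h]; simp [h]

private lemma topB_one (M : Set (Finset α × Finset α)) (σ : Finset α) :
    topB M σ = 1 ↔ ∃ p ∈ M, σ = p.2 := by
  unfold topB
  by_cases h : ∃ p ∈ M, σ = p.2
  · rw [if_pos h]; simp [h]
  · rw [if_neg h]; simp [h]

private lemma topB_zero (M : Set (Finset α × Finset α)) (σ : Finset α) :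
    topB M σ = 0 ↔ ¬ ∃ p ∈ M, σ = p.2 := by
  unfold topB
  by_cases h : ∃ p ∈ M, σ = p.2
  · rw [if_pos h]; simp [h]
  · rw [if_neg h]; simp [h]

private lemma botB_zero (M : Set (Finset α × Finset α)) (σ : Finset α) :
    botB M σ = 0 ↔ ¬ ∃ p ∈ M, σ = p.1 := by
  unfold botB
  by_cases h : ∃ p ∈ M, σ = p.1
  · rw [if_pos h]; simp [h]
  · rw [if_neg h]; simp [h]

theorem boolean_lemma {α : Type} [DecidableEq α] (F : Set (Finset α)) (e₀ : α)
    (F₀ F₁ : Set (Finset α)) (M₀ : Set (Finset α × Finset α))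
    (hF₀ : F₀ = {σ | σ.erase e₀ ∈ F ∧ insert e₀ σ ∈ F})
    (hF₁ : F₁ = F \ F₀)
    (hM₀ : M₀ = {p | p.1 ∈ F₀ ∧ e₀ ∉ p.1 ∧ p.2 = insert e₀ p.1}) :
    (IsElemMatching F₀ M₀ ∧ MorseAcyclic F₀ M₀ ∧ ∀ σ, ¬ MorseCritical F₀ M₀ σ) ∧
    ∀ M₁ : Set (Finset α × Finset α), IsElemMatching F₁ M₁ → MorseAcyclic F₁ M₁ →
      IsElemMatching F (M₀ ∪ M₁) ∧ MorseAcyclic F (M₀ ∪ M₁) ∧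
      ∀ σ, MorseCritical F (M₀ ∪ M₁) σ ↔ MorseCritical F₁ M₁ σ := by
  have memF₀ : ∀ σ : Finset α, σ ∈ F₀ ↔ σ.erase e₀ ∈ F ∧ insert e₀ σ ∈ F := by
    intro σ; rw [hF₀]; exact Iff.rfl
  have memM₀ : ∀ p : Finset α × Finset α,
      p ∈ M₀ ↔ p.1 ∈ F₀ ∧ e₀ ∉ p.1 ∧ p.2 = insert e₀ p.1 := by
    intro p; rw [hM₀]; exact Iff.rfl
  have memF₁ : ∀ σ : Finset α, σ ∈ F₁ ↔ σ ∈ F ∧ σ ∉ F₀ := by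
    intro σ; rw [hF₁]; exact Iff.rfl
  have hF₀F : F₀ ⊆ F := by
    intro σ hσ
    rw [memF₀] at hσ
    by_cases h : e₀ ∈ σ
    · have := hσ.2; rwa [Finset.insert_eq_self.mpr h] at this
    · have := hσ.1; rwa [Finset.erase_eq_self.mpr h] at this
  have hF₁F : F₁ ⊆ F := fun σ h => ((memF₁ σ).1 h).1
  have hInsF₀ : ∀ σ ∈ F₀, insert e₀ σ ∈ F₀ := by
    intro σ hσ
    rw [memF₀] at hσ ⊢
    constructor
    · rw [Finset.erase_insert_eq_erase]; exact hσ.1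
    · rw [Finset.insert_idem]; exact hσ.2
  have hins_erase : ∀ σ : Finset α, insert e₀ (σ.erase e₀) = insert e₀ σ := by
    intro σ; ext x
    simp only [Finset.mem_insert, Finset.mem_erase]
    constructor
    · rintro (h | ⟨_, h⟩) <;> tauto
    · rintro (h | h)
      · exact Or.inl h
      · by_cases hx : x = e₀ <;> tauto
  have hEraseF₀ : ∀ σ ∈ F₀, σ.erase e₀ ∈ F₀ := by
    intro σ hσ
    rw [memF₀] at hσ ⊢
    refine ⟨?_, ?_⟩
    · rw [Finset.erase_idem]; exact hσ.1
    · rw [hins_erase]; exact hσ.2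
  have htoppair : ∀ σ ∈ F₀, e₀ ∈ σ → (σ.erase e₀, σ) ∈ M₀ := by
    intro σ hσ he
    rw [memM₀]
    exact ⟨hEraseF₀ σ hσ, Finset.notMem_erase _ _,
      by rw [hins_erase, Finset.insert_eq_self.mpr he]⟩
  have hbotpair : ∀ σ ∈ F₀, e₀ ∉ σ → (σ, insert e₀ σ) ∈ M₀ := by
    intro σ hσ he
    rw [memM₀]
    exact ⟨hσ, he, rfl⟩
  have hMatch₀ : IsElemMatching F₀ M₀ := by
    constructor
    · intro p hp
      rw [memM₀] at hp
      obtain ⟨h1, h2, h3⟩ := hp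
      refine ⟨h1, ?_, ?_, ?_⟩
      · rw [h3]; exact hInsF₀ _ h1
      · rw [h3]; exact Finset.ssubset_insert h2
      · rw [h3, Finset.insert_sdiff_cancel h2, Finset.card_singleton]
    · intro p hp q hq hne
      rw [memM₀] at hp hq
      have hpq1 : p.1 ≠ q.1 := by
        intro h
        exact hne (Prod.ext h (by rw [hp.2.2, hq.2.2, h]))
      refine ⟨hpq1, ?_, ?_, ?_⟩
      · intro h
        rw [hq.2.2] at h
        exact hp.2.1 (h ▸ Finset.mem_insert_self e₀ q.1)
      · intro h
        apply hq.2.1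
        rw [← h, hp.2.2]
        exact Finset.mem_insert_self _ _
      · intro h
        apply hpq1
        rw [hp.2.2, hq.2.2] at h
        have h' := congrArg (fun s => Finset.erase s e₀) h
        simpa [Finset.erase_insert hp.2.1, Finset.erase_insert hq.2.1] using h'
  have hdown₀ : ∀ a c : Finset α, a ∈ F₀ → c ∈ F₀ → c ⊂ a → (a \ c).card = 1 →
      (c, a) ∉ M₀ → ∃ x, x ≠ e₀ ∧ x ∈ a ∧ c = a.erase x ∧ a.card = c.card + 1 := by
    intro a c ha hc hsub hcard hnm
    obtain ⟨x, hxa, hxc, hce, hcardeq⟩ := cover_struct hsub hcard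
    refine ⟨x, ?_, hxa, hce, hcardeq⟩
    intro hxe
    subst hxe
    apply hnm
    rw [memM₀]
    refine ⟨hc, by rw [hce]; exact Finset.notMem_erase _ _, ?_⟩
    rw [hce, hins_erase, Finset.insert_eq_self.mpr hxa]
  have hAc₀ : MorseAcyclic F₀ M₀ := by
    apply transGen_not_refl
      (m := fun σ => 2 * (σ.erase e₀).card + (if e₀ ∈ σ then 0 else 1))
    rintro a c ⟨ha, hc, hcase⟩
    rcases hcase with hm | ⟨hsub, hcard, hnm⟩
    · rw [memM₀] at hm
      have he : e₀ ∉ a := hm.2.1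
      have hceq : c = insert e₀ a := hm.2.2
      subst hceq
      show 2 * ((insert e₀ a).erase e₀).card + (if e₀ ∈ insert e₀ a then 0 else 1) <
        2 * (a.erase e₀).card + (if e₀ ∈ a then 0 else 1)
      rw [Finset.erase_insert_eq_erase]
      have h1 : e₀ ∈ insert e₀ a := Finset.mem_insert_self _ _
      rw [if_pos h1, if_neg he]
      omega
    · obtain ⟨x, hxe, hxa, hce, _⟩ := hdown₀ a c ha hc hsub hcard hnm
      subst hce
      show 2 * ((a.erase x).erase e₀).card + (if e₀ ∈ a.erase x then 0 else 1) <
        2 * (a.erase e₀).card + (if e₀ ∈ a then 0 else 1)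
      rw [Finset.erase_right_comm]
      have hx : x ∈ a.erase e₀ := Finset.mem_erase.mpr ⟨hxe, hxa⟩
      have h1 : ((a.erase e₀).erase x).card = (a.erase e₀).card - 1 :=
        Finset.card_erase_of_mem hx
      have h2 : 1 ≤ (a.erase e₀).card := Finset.card_pos.mpr ⟨x, hx⟩
      have h3 : (if e₀ ∈ a.erase x then 0 else 1) ≤ 1 := by split <;> omega
      have h4 : (0:ℕ) ≤ (if e₀ ∈ a then 0 else 1) := by omega
      omega
  have hComp₀ : ∀ σ, ¬ MorseCritical F₀ M₀ σ := by
    rintro σ ⟨hσ, hav⟩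
    by_cases he : e₀ ∈ σ
    · exact (hav _ (htoppair σ hσ he)).2 rfl
    · exact (hav _ (hbotpair σ hσ he)).1 rfl
  refine ⟨⟨hMatch₀, hAc₀, hComp₀⟩, ?_⟩
  intro M₁ hM₁ hAc₁
  have cross : ∀ a b : Finset α, a ∈ F₀ → b ∈ F₁ → a ≠ b := by
    intro a b ha hb h
    exact ((memF₁ b).1 hb).2 (h ▸ ha)
  have hMatchU : IsElemMatching F (M₀ ∪ M₁) := by
    constructor
    · rintro p (hp | hp)
      · obtain ⟨h1, h2, h3, h4⟩ := hMatch₀.1 p hp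
        exact ⟨hF₀F h1, hF₀F h2, h3, h4⟩
      · obtain ⟨h1, h2, h3, h4⟩ := hM₁.1 p hp
        exact ⟨hF₁F h1, hF₁F h2, h3, h4⟩
    · rintro p (hp | hp) q (hq | hq) hne
      · exact hMatch₀.2 p hp q hq hne
      · obtain ⟨hp1, hp2, _, _⟩ := hMatch₀.1 p hp
        obtain ⟨hq1, hq2, _, _⟩ := hM₁.1 q hq
        exact ⟨cross _ _ hp1 hq1, cross _ _ hp1 hq2, cross _ _ hp2 hq1, cross _ _ hp2 hq2⟩
      · obtain ⟨hp1, hp2, _, _⟩ := hM₁.1 p hp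
        obtain ⟨hq1, hq2, _, _⟩ := hMatch₀.1 q hq
        exact ⟨(cross _ _ hq1 hp1).symm, (cross _ _ hq2 hp1).symm,
          (cross _ _ hq1 hp2).symm, (cross _ _ hq2 hp2).symm⟩
      · exact hM₁.2 p hp q hq hne
  have hpaircard : ∀ p ∈ M₀ ∪ M₁, p.2.card = p.1.card + 1 := by
    intro p hp
    obtain ⟨_, _, h3, h4⟩ := hMatchU.1 p hp
    obtain ⟨x, _, _, _, h⟩ := cover_struct h3 h4
    exact h
  have hbot_of_pair : ∀ p ∈ M₀ ∪ M₁,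
      botB (M₀ ∪ M₁) p.1 = 1 ∧ botB (M₀ ∪ M₁) p.2 = 0 := by
    intro p hp
    constructor
    · exact (botB_one _ _).mpr ⟨p, hp, rfl⟩
    · rw [botB_zero]
      rintro ⟨q, hq, hq2⟩
      by_cases hpq : p = q
      · subst hpq
        have hss := (hMatchU.1 p hp).2.2.1
        rw [hq2] at hss
        exact ssubset_irrefl _ hss
      · exact (hMatchU.2 p hp q hq hpq).2.2.1 hq2
  have hdownU : ∀ a c : Finset α, a ∈ F → c ∈ F → c ⊂ a → (a \ c).card = 1 →
      (c, a) ∉ M₀ ∪ M₁ → ∃ x, x ≠ e₀ ∧ x ∈ a ∧ c = a.erase x ∧ a.card = c.card + 1 := by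
    intro a c ha hc hsub hcard hnm
    obtain ⟨x, hxa, hxc, hce, hcardeq⟩ := cover_struct hsub hcard
    refine ⟨x, ?_, hxa, hce, hcardeq⟩
    intro hxe
    subst hxe
    apply hnm
    left
    rw [memM₀]
    have hcF₀ : c ∈ F₀ := by
      rw [memF₀]
      constructor
      · rw [hce, Finset.erase_idem, ← hce]; exact hc
      · rw [hce, hins_erase, Finset.insert_eq_self.mpr hxa]; exact ha
    refine ⟨hcF₀, by rw [hce]; exact Finset.notMem_erase _ _, ?_⟩
    rw [hce, hins_erase, Finset.insert_eq_self.mpr hxa]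
  -- measures: eflag is non-increasing along edges
  have hflag_mono : ∀ a c, MorseEdge F (M₀ ∪ M₁) a c → eflag e₀ c ≤ eflag e₀ a := by
    rintro a c ⟨ha, hc, hcase⟩
    rcases hcase with hm | ⟨hsub, hcard, hnm⟩
    · have h3 := (hMatchU.1 _ hm).2.2.1
      unfold eflag
      by_cases h : e₀ ∈ a
      · rw [if_pos h, if_pos (h3.subset h)]
      · split <;> omega
    · obtain ⟨x, hxe, hxa, hce, _⟩ := hdownU a c ha hc hsub hcard hnm
      subst hce
      unfold eflag
      have hiff : e₀ ∈ a.erase x ↔ e₀ ∈ a := by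
        rw [Finset.mem_erase]
        exact ⟨fun h => h.2, fun h => ⟨fun hh => hxe hh.symm, h⟩⟩
      by_cases h : e₀ ∈ a
      · rw [if_pos h, if_pos (hiff.mpr h)]
      · rw [if_neg h, if_neg (fun hh => h (hiff.mp hh))]
  -- height (card + botB) is non-increasing along edges
  have hhgt_mono : ∀ a c, MorseEdge F (M₀ ∪ M₁) a c →
      c.card + botB (M₀ ∪ M₁) c ≤ a.card + botB (M₀ ∪ M₁) a := by
    rintro a c ⟨ha, hc, hcase⟩
    rcases hcase with hm | ⟨hsub, hcard, hnm⟩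
    · have h1 : c.card = a.card + 1 := hpaircard _ hm
      have h2 : botB (M₀ ∪ M₁) a = 1 := (hbot_of_pair _ hm).1
      have h3 : botB (M₀ ∪ M₁) c = 0 := (hbot_of_pair _ hm).2
      omega
    · obtain ⟨x, hxe, hxa, hce, hcardeq⟩ := hdownU a c ha hc hsub hcard hnm
      have := botB_le (M₀ ∪ M₁) c
      omega
  -- analysis of edges along which eflag and height are constant
  have step2 : ∀ a c, MorseEdge F (M₀ ∪ M₁) a c → eflag e₀ a = eflag e₀ c →
      a.card + botB (M₀ ∪ M₁) a = c.card + botB (M₀ ∪ M₁) c →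
      ((a, c) ∈ M₁ ∧ a ∈ F₁ ∧ c ∈ F₁) ∨
      (botB (M₀ ∪ M₁) a = 0 ∧ botB (M₀ ∪ M₁) c = 1 ∧
        c ⊂ a ∧ (a \ c).card = 1 ∧ (c, a) ∉ M₀ ∪ M₁) := by
    rintro a c ⟨ha, hcF, hcase⟩ hfl hh
    rcases hcase with hm | ⟨hsub, hcard, hnm⟩
    · rcases hm with hm0 | hm1
      · exfalso
        rw [memM₀] at hm0
        have he : e₀ ∉ a := hm0.2.1
        have hceq : c = insert e₀ a := hm0.2.2
        unfold eflag at hfl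
        rw [if_neg he, hceq, if_pos (Finset.mem_insert_self _ _)] at hfl
        omega
      · exact Or.inl ⟨hm1, (hM₁.1 _ hm1).1, (hM₁.1 _ hm1).2.1⟩
    · obtain ⟨x, hxe, hxa, hce, hcardeq⟩ := hdownU a c ha hcF hsub hcard hnm
      have h1 := botB_le (M₀ ∪ M₁) a
      have h2 := botB_le (M₀ ∪ M₁) c
      exact Or.inr ⟨by omega, by omega, hsub, hcard, hnm⟩
  -- targets of such edges are never tops of M₀-pairs
  have htop_target : ∀ a c, MorseEdge F (M₀ ∪ M₁) a c → eflag e₀ a = eflag e₀ c →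
      a.card + botB (M₀ ∪ M₁) a = c.card + botB (M₀ ∪ M₁) c → topB M₀ c = 0 := by
    intro a c hedge hfl hh
    rcases step2 a c hedge hfl hh with ⟨_, _, hcF₁⟩ | ⟨_, hbc, _, _, _⟩
    · rw [topB_zero]
      rintro ⟨q, hq, hq2⟩
      have hmem := hInsF₀ q.1 ((memM₀ q).1 hq).1
      rw [← ((memM₀ q).1 hq).2.2] at hmem
      exact cross _ _ hmem hcF₁ hq2.symm
    · rw [topB_zero]
      rintro ⟨q, hq, hq2⟩
      obtain ⟨p, hp, hp1⟩ := (botB_one _ _).mp hbc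
      by_cases hpq : p = q
      · subst hpq
        have hss := (hMatchU.1 p hp).2.2.1
        rw [← hp1, ← hq2] at hss
        exact ssubset_irrefl _ hss
      · exact (hMatchU.2 p hp q (Or.inl hq) hpq).2.1 (hp1.symm.trans hq2)
  -- sources of such edges are never bottoms of M₀-pairs
  have hsrc_notbot : ∀ a c, MorseEdge F (M₀ ∪ M₁) a c → eflag e₀ a = eflag e₀ c →
      a.card + botB (M₀ ∪ M₁) a = c.card + botB (M₀ ∪ M₁) c →
      ¬ ∃ p ∈ M₀, a = p.1 := by
    rintro a c hedge hfl hh ⟨p, hp, hpa⟩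
    rcases step2 a c hedge hfl hh with ⟨_, haF₁, _⟩ | ⟨hba, _, _, _, _⟩
    · exact cross _ _ (hpa ▸ ((memM₀ p).1 hp).1) haF₁ rfl
    · have : botB (M₀ ∪ M₁) a = 1 := (botB_one _ _).mpr ⟨p, Or.inl hp, hpa⟩
      omega
  -- the final containment into the digraph of (F₁, M₁)
  have final : ∀ a c, MorseEdge F (M₀ ∪ M₁) a c → eflag e₀ a = eflag e₀ c →
      a.card + botB (M₀ ∪ M₁) a = c.card + botB (M₀ ∪ M₁) c →
      topB M₀ a = topB M₀ c → (1 - botB M₀ a) = (1 - botB M₀ c) →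
      MorseEdge F₁ M₁ a c := by
    intro a c hedge hfl hh htopeq hboteq
    rcases step2 a c hedge hfl hh with ⟨hm1, ha, hc'⟩ | ⟨hba, hbc, hsub, hcard, hnm⟩
    · exact ⟨ha, hc', Or.inl hm1⟩
    · have hnb_a : ¬ ∃ p ∈ M₀, a = p.1 := hsrc_notbot a c hedge hfl hh
      have hA0 : botB M₀ a = 0 := (botB_zero _ _).mpr hnb_a
      have hCle := botB_le M₀ c
      have hC0 : botB M₀ c = 0 := by omega
      have hcnb : ¬ ∃ p ∈ M₀, c = p.1 := (botB_zero _ _).mp hC0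
      obtain ⟨q, hq, hcq⟩ := (botB_one _ _).mp hbc
      rcases hq with hq0 | hq1
      · exact absurd ⟨q, hq0, hcq⟩ hcnb
      have hcF₁ : c ∈ F₁ := hcq ▸ (hM₁.1 q hq1).1
      have haF : a ∈ F := hedge.1
      have haF₁ : a ∈ F₁ := by
        rw [memF₁]
        refine ⟨haF, fun haF₀ => ?_⟩
        by_cases he : e₀ ∈ a
        · have h1 : topB M₀ a = 1 :=
            (topB_one _ _).mpr ⟨(a.erase e₀, a), htoppair a haF₀ he, rfl⟩
          have h2 : topB M₀ c = 0 := htop_target a c hedge hfl hh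
          rw [htopeq, h2] at h1
          omega
        · exact hnb_a ⟨(a, insert e₀ a), hbotpair a haF₀ he, rfl⟩
      exact ⟨haF₁, hcF₁, Or.inr ⟨hsub, hcard, fun h => hnm (Or.inr h)⟩⟩
  refine ⟨hMatchU, ?_, ?_⟩
  · -- acyclicity of the union
    intro a0 hc0
    have hc1 := cycle_restrict (eflag e₀) hflag_mono hc0
    have hc2 := cycle_restrict (fun σ => σ.card + botB (M₀ ∪ M₁) σ)
      (fun a c h => hhgt_mono a c h.1) hc1
    have hc3 := cycle_restrict (topB M₀)
      (fun a c h => by rw [htop_target a c h.1.1 h.1.2 h.2]; exact Nat.zero_le _) hc2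
    have hc4 := cycle_restrict (fun σ => 1 - botB M₀ σ)
      (fun a c h => by
        have hnb := hsrc_notbot a c h.1.1.1 h.1.1.2 h.1.2
        have hA0 : botB M₀ a = 0 := (botB_zero _ _).mpr hnb
        have := botB_le M₀ c
        show 1 - botB M₀ c ≤ 1 - botB M₀ a
        omega) hc3
    exact hAc₁ a0 (Relation.TransGen.mono
      (fun a c h => final a c h.1.1.1.1 h.1.1.1.2 h.1.1.2 h.1.2 h.2) _ _ hc4)
  · -- criticality
    intro σ
    constructor
    · rintro ⟨hσF, hav⟩
      have hσ₀ : σ ∉ F₀ := by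
        intro h
        by_cases he : e₀ ∈ σ
        · exact (hav _ (Or.inl (htoppair σ h he))).2 rfl
        · exact (hav _ (Or.inl (hbotpair σ h he))).1 rfl
      exact ⟨(memF₁ σ).2 ⟨hσF, hσ₀⟩, fun p hp => hav p (Or.inr hp)⟩
    · rintro ⟨hσF₁, hav₁⟩
      refine ⟨hF₁F hσF₁, ?_⟩
      rintro p (hp | hp)
      · obtain ⟨hp1, hp2, _, _⟩ := hMatch₀.1 p hp
        exact ⟨(cross _ _ hp1 hσF₁).symm, (cross _ _ hp2 hσF₁).symm⟩
      · exact hav₁ p hp
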